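/- arXiv:1311.5049 — 8 statements merged into one kernel-verified Lean document; each statement's English description precedes it below -/
import Mathlib

section
/- A digraph X is ultrahomogeneous if and only if its enlargement X_e is ultrahomogeneous. -/
def enlarge {X : Type*} (ρ : X → X → Prop) (x y : X) : Prop :=
  ρ x y ∨ (x ≠ y ∧ ¬ ρ x y ∧ ¬ ρ y x)

def IsPartialIso {X : Type*} (ρ : X → X → Prop) (A : Set X) (f : X → X) : Prop :=
  A.Finite ∧ Set.InjOn f A ∧ ∀ a ∈ A, ∀ b ∈ A, (ρ a b ↔ ρ (f a) (f b))

def IsAuto {X : Type*} (ρ : X → X → Prop) (f : X → X) : Prop :=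
  Function.Bijective f ∧ ∀ a b : X, ρ a b ↔ ρ (f a) (f b)

def Ultrahomogeneous {X : Type*} (ρ : X → X → Prop) : Prop :=
  ∀ A f, IsPartialIso ρ A f → ∃ g, IsAuto ρ g ∧ Set.EqOn f g A

lemma enl_ne {X : Type*} {ρ : X → X → Prop}
    (hirr : ∀ x : X, ¬ ρ x x) (hasym : ∀ x y : X, ρ x y → ¬ ρ y x)
    {a b : X} (h : a ≠ b) : enlarge ρ a b ↔ ¬ ρ b a := by
  constructor
  · rintro (h1 | ⟨_, _, h2⟩)
    · exact hasym a b h1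
    · exact h2
  · intro hba
    by_cases h1 : ρ a b
    · exact Or.inl h1
    · exact Or.inr ⟨h, h1, hba⟩

lemma transfer {X : Type*} {ρ : X → X → Prop}
    (hirr : ∀ x : X, ¬ ρ x x) (hasym : ∀ x y : X, ρ x y → ¬ ρ y x)
    {A : Set X} {f : X → X} (hinj : Set.InjOn f A) :
    (∀ a ∈ A, ∀ b ∈ A, (ρ a b ↔ ρ (f a) (f b))) ↔
    (∀ a ∈ A, ∀ b ∈ A, (enlarge ρ a b ↔ enlarge ρ (f a) (f b))) := by
  constructor
  · intro h a ha b hb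
    by_cases hab : a = b
    · subst hab
      simp [enlarge, hirr a, hirr (f a)]
    · have hfab : f a ≠ f b := fun he => hab (hinj ha hb he)
      rw [enl_ne hirr hasym hab, enl_ne hirr hasym hfab]
      exact not_congr (h b hb a ha)
  · intro h a ha b hb
    by_cases hab : a = b
    · subst hab
      simp [hirr a, hirr (f a)]
    · have hfab : f a ≠ f b := fun he => hab (hinj ha hb he)
      have e1 := enl_ne hirr hasym (Ne.symm hab) (ρ := ρ)
      have e2 := enl_ne hirr hasym (Ne.symm hfab) (ρ := ρ)
      have e3 := h b hb a ha
      tauto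

theorem ultra_enlarge {X : Type*} (ρ : X → X → Prop)
    (hirr : ∀ x : X, ¬ ρ x x) (hasym : ∀ x y : X, ρ x y → ¬ ρ y x) :
    Ultrahomogeneous ρ ↔ Ultrahomogeneous (enlarge ρ) := by
  constructor
  · intro H A f ⟨hfin, hinj, hpres⟩
    obtain ⟨g, ⟨hgbij, hgpres⟩, heq⟩ :=
      H A f ⟨hfin, hinj, (transfer hirr hasym hinj).mpr hpres⟩
    refine ⟨g, ⟨hgbij, ?_⟩, heq⟩
    have := (transfer hirr hasym (f := g) (A := Set.univ)
      (Set.injOn_of_injective hgbij.injective)).mp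
      (fun a _ b _ => hgpres a b)
    exact fun a b => this a trivial b trivial
  · intro H A f ⟨hfin, hinj, hpres⟩
    obtain ⟨g, ⟨hgbij, hgpres⟩, heq⟩ :=
      H A f ⟨hfin, hinj, (transfer hirr hasym hinj).mp hpres⟩
    refine ⟨g, ⟨hgbij, ?_⟩, heq⟩
    have := (transfer hirr hasym (f := g) (A := Set.univ)
      (Set.injOn_of_injective hgbij.injective)).mpr
      (fun a _ b _ => hgpres a b)
    exact fun a b => this a trivial b trivial
end

section
/- If an irreflexive disconnected binary structure X (with at least two connectivity components) is ultrahomogeneous, then all its connectivity components are pairwise isomorphic, each component is ultrahomogeneous, and each component is a complete structure (for all distinct x,y in a component, x ρ y or y ρ x). -/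
def component {X : Type*} (ρ : X → X → Prop) (x : X) : Set X :=
  {y | Relation.EqvGen ρ x y}

/-- The substructure of `⟨X,ρ⟩` on the set `S` is ultrahomogeneous: every finite
partial isomorphism inside `S` extends to an automorphism of the substructure on `S`. -/
def UltraOn {X : Type*} (ρ : X → X → Prop) (S : Set X) : Prop :=
  ∀ A f, A ⊆ S → Set.MapsTo f A S → IsPartialIso ρ A f →
    ∃ g : X → X, Set.BijOn g S S ∧ (∀ a ∈ S, ∀ b ∈ S, (ρ a b ↔ ρ (g a) (g b))) ∧
      Set.EqOn f g A

lemma eqvgen_map {X : Type*} {ρ : X → X → Prop} {g : X → X}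
    (hg : ∀ u v, ρ u v ↔ ρ (g u) (g v)) {a b : X}
    (h : Relation.EqvGen ρ a b) : Relation.EqvGen ρ (g a) (g b) := by
  induction h with
  | rel u v h => exact Relation.EqvGen.rel _ _ ((hg u v).1 h)
  | refl u => exact Relation.EqvGen.refl _
  | symm u v _ ih => exact Relation.EqvGen.symm _ _ ih
  | trans u v w _ _ ih1 ih2 => exact Relation.EqvGen.trans _ _ _ ih1 ih2

lemma auto_inv {X : Type*} {ρ : X → X → Prop} {g : X → X} (hg : IsAuto ρ g) :
    ∃ h : X → X, IsAuto ρ h ∧ (∀ x, h (g x) = x) ∧ (∀ x, g (h x) = x) := by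
  obtain ⟨hb, hiff⟩ := hg
  obtain ⟨h, hl, hr⟩ := Function.bijective_iff_has_inverse.1 hb
  refine ⟨h, ⟨Function.bijective_iff_has_inverse.2 ⟨g, hr, hl⟩, ?_⟩, hl, hr⟩
  intro u v
  have := hiff (h u) (h v)
  rw [hr u, hr v] at this
  exact this.symm

lemma comp_eq {X : Type*} {ρ : X → X → Prop} {x y : X}
    (h : Relation.EqvGen ρ x y) : component ρ x = component ρ y := by
  ext z
  constructor
  · intro hz
    exact Relation.EqvGen.trans _ _ _ (Relation.EqvGen.symm _ _ h) hz
  · intro hz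
    exact Relation.EqvGen.trans _ _ _ h hz

lemma auto_bijOn_comp {X : Type*} {ρ : X → X → Prop} {g : X → X} (hg : IsAuto ρ g)
    (x : X) : Set.BijOn g (component ρ x) (component ρ (g x)) := by
  obtain ⟨h, hauto, hl, hr⟩ := auto_inv hg
  refine ⟨fun a ha => eqvgen_map hg.2 ha, hg.1.1.injOn, ?_⟩
  intro z hz
  refine ⟨h z, ?_, hr z⟩
  have := eqvgen_map hauto.2 hz
  rw [hl x] at this
  exact this

theorem ultra_disconnected_components {X : Type*} (ρ : X → X → Prop)
    (hirr : ∀ x : X, ¬ ρ x x)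
    (hdisc : ∃ x y : X, ¬ Relation.EqvGen ρ x y)
    (hultra : Ultrahomogeneous ρ) :
    (∀ x y : X, ∃ f : X → X, Set.BijOn f (component ρ x) (component ρ y) ∧
        ∀ a ∈ component ρ x, ∀ b ∈ component ρ x, (ρ a b ↔ ρ (f a) (f b))) ∧
    (∀ x : X, UltraOn ρ (component ρ x)) ∧
    (∀ x : X, ∀ a ∈ component ρ x, ∀ b ∈ component ρ x, a ≠ b → ρ a b ∨ ρ b a) := by
  refine ⟨?_, ?_, ?_⟩
  · -- components pairwise isomorphic
    intro x y
    have hpi : IsPartialIso ρ {x} (fun _ => y) := by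
      refine ⟨Set.finite_singleton x, ?_, ?_⟩
      · intro a ha b hb _
        rw [Set.mem_singleton_iff] at ha hb; rw [ha, hb]
      · intro a ha b hb
        rw [Set.mem_singleton_iff] at ha hb
        rw [ha, hb]
        exact iff_of_false (hirr x) (hirr y)
    obtain ⟨g, hauto, heq⟩ := hultra _ _ hpi
    have hgx : g x = y := (heq (Set.mem_singleton x)).symm
    refine ⟨g, ?_, fun a _ b _ => hauto.2 a b⟩
    have := auto_bijOn_comp hauto x
    rwa [hgx] at this
  · -- each component ultrahomogeneous
    intro x A f hA hmaps hpi
    by_cases hne : A.Nonempty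
    · obtain ⟨a₀, ha₀⟩ := hne
      obtain ⟨g, hauto, heq⟩ := hultra _ _ hpi
      refine ⟨g, ?_, fun a _ b _ => hauto.2 a b, heq⟩
      have h1 : component ρ x = component ρ a₀ := comp_eq (hA ha₀)
      have h2 : component ρ (g a₀) = component ρ x := by
        rw [← heq ha₀]
        exact (comp_eq (hmaps ha₀)).symm
      have := auto_bijOn_comp hauto a₀
      rwa [← h1, h2] at this
    · rw [Set.not_nonempty_iff_eq_empty] at hne
      subst hne
      exact ⟨id, Set.bijOn_id _, fun a _ b _ => Iff.rfl, fun a ha => absurd ha (by simp)⟩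
  · -- completeness of components
    intro x a ha b hb hab
    by_contra hcon
    push_neg at hcon
    obtain ⟨hnab, hnba⟩ := hcon
    -- find c outside component of a
    obtain ⟨u, v, huv⟩ := hdisc
    have hc : ∃ c, ¬ Relation.EqvGen ρ a c := by
      by_contra h
      push_neg at h
      exact huv (Relation.EqvGen.trans _ _ _ (Relation.EqvGen.symm _ _ (h u)) (h v))
    obtain ⟨c, hc⟩ := hc
    have hnac : ¬ ρ a c := fun h => hc (Relation.EqvGen.rel _ _ h)
    have hnca : ¬ ρ c a := fun h =>
      hc (Relation.EqvGen.symm _ _ (Relation.EqvGen.rel _ _ h))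
    have hac : a ≠ c := fun h => hc (h ▸ Relation.EqvGen.refl a)
    classical
    set f : X → X := Function.update (fun _ => a) b c with hf
    have hfa : f a = a := by simp [hf, Function.update_of_ne hab]
    have hfb : f b = c := by simp [hf]
    have hpi : IsPartialIso ρ {a, b} f := by
      refine ⟨(Set.finite_singleton a).insert b |>.subset (by intro z hz; simp at hz ⊢; tauto), ?_, ?_⟩
      · intro p hp q hq hpq
        simp only [Set.mem_insert_iff, Set.mem_singleton_iff] at hp hq
        rcases hp with rfl | rfl <;> rcases hq with rfl | rfl <;>
          simp only [hfa, hfb] at hpq ⊢ <;> first | rfl | (exact absurd hpq hac) | (exact absurd hpq.symm hac)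
      · intro p hp q hq
        simp only [Set.mem_insert_iff, Set.mem_singleton_iff] at hp hq
        rcases hp with rfl | rfl <;> rcases hq with rfl | rfl <;>
          simp only [hfa, hfb] <;>
          exact iff_of_false (by first | exact hirr _ | exact hnab | exact hnba | exact hnac | exact hnca)
            (by first | exact hirr _ | exact hnab | exact hnba | exact hnac | exact hnca)
    obtain ⟨g, hauto, heq⟩ := hultra _ _ hpi
    have hga : g a = a := by rw [← heq (by simp), hfa]
    have hgb : g b = c := by rw [← heq (by simp), hfb]
    have hab' : Relation.EqvGen ρ a b :=
      Relation.EqvGen.trans _ _ _ (Relation.EqvGen.symm _ _ ha) hb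
    have := eqvgen_map hauto.2 hab'
    rw [hga, hgb] at this
    exact hc this
end

section
/- Let X be the disjoint union of irreflexive connected binary structures X_i (i ∈ I, |I| > 1) which are pairwise isomorphic, each ultrahomogeneous, and each complete. Then X is ultrahomogeneous. -/
theorem extend_finset_perm {I : Type*} (s : Finset I) :
    ∀ π : I → I, Set.InjOn π ↑s → ∃ σ : Equiv.Perm I, ∀ i ∈ s, σ i = π i := by
  classical
  induction s using Finset.induction_on with
  | empty => exact fun π _ => ⟨Equiv.refl I, by simp⟩
  | @insert a s ha ih =>
    intro π hπ
    obtain ⟨σ, hσ⟩ := ih π (hπ.mono (by intro x hx; simp only [Finset.coe_insert, Set.mem_insert_iff]; exact Or.inr hx))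
    refine ⟨σ.trans (Equiv.swap (σ a) (π a)), ?_⟩
    intro i hi
    rcases Finset.mem_insert.1 hi with rfl | hi
    · simp [Equiv.swap_apply_left]
    · have h1 : σ i = π i := hσ i hi
      have h2 : π i ≠ σ a := by
        intro h
        exact ha (by rwa [← h1, σ.injective.eq_iff, eq_comm] at h ▸ hi)
      have h3 : π i ≠ π a := by
        intro h
        have := hπ (by simp [hi]) (by simp) h
        exact ha (this ▸ hi)
      simp only [Equiv.trans_apply, h1]
      rw [Equiv.swap_apply_of_ne_of_ne h2 h3]

/-- If `X` is the disjoint union (partition `S`) of more than one nonempty,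
irreflexive, connected, pairwise isomorphic, ultrahomogeneous and complete binary
structures, then `X` is ultrahomogeneous. -/
theorem union_ultrahomogeneous {X I : Type*} (ρ : X → X → Prop) (S : I → Set X)
    (hcover : ∀ x : X, ∃! i, x ∈ S i)
    (hne : ∀ i, (S i).Nonempty)
    (hrel : ∀ a b : X, ρ a b → ∃ i, a ∈ S i ∧ b ∈ S i)
    (hirr : ∀ x : X, ¬ ρ x x)
    (hconn : ∀ i, ∀ a ∈ S i, ∀ b ∈ S i, Relation.EqvGen ρ a b)
    (hmany : ∃ i j : I, i ≠ j)
    (hiso : ∀ i j, ∃ f : X → X, Set.BijOn f (S i) (S j) ∧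
        ∀ a ∈ S i, ∀ b ∈ S i, (ρ a b ↔ ρ (f a) (f b)))
    (hultra : ∀ i, UltraOn ρ (S i))
    (hcomplete : ∀ i, ∀ a ∈ S i, ∀ b ∈ S i, a ≠ b → ρ a b ∨ ρ b a) :
    Ultrahomogeneous ρ := by
  classical
  have hXne : Nonempty X := ⟨(hne hmany.choose).choose⟩
  intro A f hf
  obtain ⟨hAfin, hinj, hpres⟩ := hf
  set idx : X → I := fun x => (hcover x).choose with hidxdef
  have mem_idx : ∀ x : X, x ∈ S (idx x) := fun x => (hcover x).choose_spec.1
  have idx_eq : ∀ {x : X} {i : I}, x ∈ S i → idx x = i :=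
    fun {x i} h => ((hcover x).choose_spec.2 i h).symm
  -- same piece transfer
  have same : ∀ a ∈ A, ∀ b ∈ A, (idx a = idx b ↔ idx (f a) = idx (f b)) := by
    intro a ha b hb
    by_cases hab : a = b
    · subst hab; simp
    constructor
    · intro h
      have hb' : b ∈ S (idx a) := by rw [h]; exact mem_idx b
      have hc := hcomplete (idx a) a (mem_idx a) b hb' hab
      have hc' : ρ (f a) (f b) ∨ ρ (f b) (f a) := by
        rcases hc with h1 | h1
        · exact Or.inl ((hpres a ha b hb).1 h1)
        · exact Or.inr ((hpres b hb a ha).1 h1)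
      rcases hc' with h1 | h1
      · obtain ⟨i, hi1, hi2⟩ := hrel _ _ h1
        rw [idx_eq hi1, idx_eq hi2]
      · obtain ⟨i, hi1, hi2⟩ := hrel _ _ h1
        rw [idx_eq hi2, idx_eq hi1]
    · intro h
      by_contra hne'
      have hfab : f a ≠ f b := fun e => hab (hinj ha hb e)
      have hfb : f b ∈ S (idx (f a)) := by rw [h]; exact mem_idx (f b)
      rcases hcomplete (idx (f a)) (f a) (mem_idx (f a)) (f b) hfb hfab with h1 | h1
      · obtain ⟨i, hi1, hi2⟩ := hrel _ _ ((hpres a ha b hb).2 h1)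
        exact hne' (by rw [idx_eq hi1, idx_eq hi2])
      · obtain ⟨i, hi1, hi2⟩ := hrel _ _ ((hpres b hb a ha).2 h1)
        exact hne' (by rw [idx_eq hi2, idx_eq hi1])
  -- the induced partial map on indices
  set π : I → I := fun i =>
    if h : ∃ a, a ∈ A ∧ idx a = i then idx (f h.choose) else i with hπdef
  have hπspec : ∀ a ∈ A, π (idx a) = idx (f a) := by
    intro a ha
    have h : ∃ a', a' ∈ A ∧ idx a' = idx a := ⟨a, ha, rfl⟩
    have : π (idx a) = idx (f h.choose) := by
      rw [hπdef]; exact dif_pos h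
    rw [this]
    exact (same h.choose h.choose_spec.1 a ha).1 h.choose_spec.2
  have hDfin : (idx '' A).Finite := hAfin.image idx
  have hπinj : Set.InjOn π (idx '' A) := by
    rintro _ ⟨a, ha, rfl⟩ _ ⟨b, hb, rfl⟩ h
    rw [hπspec a ha, hπspec b hb] at h
    exact (same a ha b hb).2 h
  obtain ⟨σ, hσ⟩ := extend_finset_perm hDfin.toFinset π
    (by rw [Set.Finite.coe_toFinset]; exact hπinj)
  have hσ' : ∀ a ∈ A, σ (idx a) = idx (f a) := by
    intro a ha
    rw [hσ (idx a) (hDfin.mem_toFinset.2 ⟨a, ha, rfl⟩)]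
    exact hπspec a ha
  -- piecewise construction
  have claim : ∀ i : I, ∃ gi : X → X, Set.BijOn gi (S i) (S (σ i)) ∧
      (∀ a ∈ S i, ∀ b ∈ S i, (ρ a b ↔ ρ (gi a) (gi b))) ∧
      (∀ a ∈ A, a ∈ S i → gi a = f a) := by
    intro i
    obtain ⟨h, hbij, hpre⟩ := hiso i (σ i)
    set B : Set X := h '' (A ∩ S i) with hBdef
    set F : X → X := f ∘ Function.invFunOn h (S i) with hFdef
    have hinv : ∀ a ∈ A ∩ S i, Function.invFunOn h (S i) (h a) = a :=
      fun a ha => hbij.injOn.leftInvOn_invFunOn ha.2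
    have hF_eq : ∀ a ∈ A ∩ S i, F (h a) = f a := by
      intro a ha
      rw [hFdef]
      simp only [Function.comp_apply, hinv a ha]
    have hBsub : B ⊆ S (σ i) := by
      rintro _ ⟨a, ha, rfl⟩
      exact hbij.mapsTo ha.2
    have hfmem : ∀ a ∈ A, a ∈ S i → f a ∈ S (σ i) := by
      intro a ha hai
      have e : σ i = idx (f a) := by rw [← idx_eq hai, hσ' a ha]
      rw [e]; exact mem_idx (f a)
    have hFmaps : Set.MapsTo F B (S (σ i)) := by
      rintro _ ⟨a, ha, rfl⟩
      rw [hF_eq a ha]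
      exact hfmem a ha.1 ha.2
    have hFpi : IsPartialIso ρ B F := by
      refine ⟨(hAfin.inter_of_left _).image h, ?_, ?_⟩
      · rintro _ ⟨a, ha, rfl⟩ _ ⟨b, hb, rfl⟩ heq
        rw [hF_eq a ha, hF_eq b hb] at heq
        rw [hinj ha.1 hb.1 heq]
      · rintro _ ⟨a, ha, rfl⟩ _ ⟨b, hb, rfl⟩
        rw [hF_eq a ha, hF_eq b hb]
        exact (hpre a ha.2 b hb.2).symm.trans (hpres a ha.1 b hb.1)
    obtain ⟨g', hg'bij, hg'pres, hg'eq⟩ := hultra (σ i) B F hBsub hFmaps hFpi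
    refine ⟨g' ∘ h, hg'bij.comp hbij, ?_, ?_⟩
    · intro a hai b hbi
      exact (hpre a hai b hbi).trans
        (hg'pres _ (hbij.mapsTo hai) _ (hbij.mapsTo hbi))
    · intro a ha hai
      show g' (h a) = f a
      exact (hg'eq ⟨a, ⟨ha, hai⟩, rfl⟩).symm.trans (hF_eq a ⟨ha, hai⟩)
  choose G hGbij hGpres hGeq using claim
  set g : X → X := fun x => G (idx x) x with hgdef
  have gmem : ∀ x : X, g x ∈ S (σ (idx x)) := fun x => (hGbij (idx x)).mapsTo (mem_idx x)
  have idxg : ∀ x : X, idx (g x) = σ (idx x) := fun x => idx_eq (gmem x)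
  have ginj : Function.Injective g := by
    intro x y hxy
    have hixy : idx x = idx y := by
      apply σ.injective
      rw [← idxg x, ← idxg y, hxy]
    have h2 : G (idx x) x = G (idx x) y := by
      rw [hgdef] at hxy
      simp only at hxy
      rw [hixy]
      rw [hixy] at hxy
      exact hxy
    exact (hGbij (idx x)).injOn (mem_idx x) (by rw [hixy]; exact mem_idx y) h2
  have gsurj : Function.Surjective g := by
    intro y
    obtain ⟨x, hx, hgx⟩ := (hGbij (σ.symm (idx y))).surjOn
      (show y ∈ S (σ (σ.symm (idx y))) by rw [Equiv.apply_symm_apply]; exact mem_idx y)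
    exact ⟨x, by show G (idx x) x = y; rw [idx_eq hx]; exact hgx⟩
  have gpres : ∀ a b : X, ρ a b ↔ ρ (g a) (g b) := by
    intro a b
    by_cases hab : idx a = idx b
    · show ρ a b ↔ ρ (G (idx a) a) (G (idx b) b)
      rw [hab]
      exact hGpres (idx b) a (by rw [← hab]; exact mem_idx a) b (mem_idx b)
    · constructor
      · intro hr
        obtain ⟨i, h1, h2⟩ := hrel a b hr
        exact absurd (by rw [idx_eq h1, idx_eq h2]) hab
      · intro hr
        obtain ⟨i, h1, h2⟩ := hrel _ _ hr
        have e : idx (g a) = idx (g b) := by rw [idx_eq h1, idx_eq h2]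
        rw [idxg, idxg] at e
        exact absurd (σ.injective e) hab
  refine ⟨g, ⟨⟨ginj, gsurj⟩, gpres⟩, ?_⟩
  intro a ha
  exact (hGeq (idx a) a ha (mem_idx a)).symm
end

section
/- If X = ⟨X,ρ⟩ is an irreflexive, ultrahomogeneous, complete binary structure, and → is the relation defined by x → y ⟺ x ρ y ∧ ¬ y ρ x, then Y = ⟨X,→⟩ is an ultrahomogeneous digraph and X equals the enlargement Y_e of Y. -/
theorem ultra_complete_is_enlarged_digraph {X : Type*} (ρ : X → X → Prop)
    (hirr : ∀ x : X, ¬ ρ x x)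
    (hcomplete : ∀ x y : X, x ≠ y → ρ x y ∨ ρ y x)
    (hultra : Ultrahomogeneous ρ) :
    (∀ x : X, ¬ (fun x y => ρ x y ∧ ¬ ρ y x) x x) ∧
    (∀ x y : X, (ρ x y ∧ ¬ ρ y x) → ¬ (ρ y x ∧ ¬ ρ x y)) ∧
    Ultrahomogeneous (fun x y => ρ x y ∧ ¬ ρ y x) ∧
    (∀ x y : X, ρ x y ↔ enlarge (fun x y => ρ x y ∧ ¬ ρ y x) x y) := by
  refine ⟨fun x h => h.2 h.1, fun x y h h' => h.2 h'.1, ?_, ?_⟩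
  · intro A f ⟨hfin, hinj, hpres⟩
    -- f is also a partial iso of ρ
    have hρ : ∀ a ∈ A, ∀ b ∈ A, (ρ a b ↔ ρ (f a) (f b)) := by
      intro a ha b hb
      by_cases hab : a = b
      · subst hab
        simp [hirr a, hirr (f a)]
      · have hfab : f a ≠ f b := fun h => hab (hinj ha hb h)
        have h1 := hpres a ha b hb
        have h2 := hpres b hb a ha
        constructor
        · intro h
          by_cases h' : ρ b a
          · -- both directions hold, so no arrow either way
            have n1 : ¬ (ρ (f a) (f b) ∧ ¬ ρ (f b) (f a)) := by
              simp only [← h1]; tauto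
            have n2 : ¬ (ρ (f b) (f a) ∧ ¬ ρ (f a) (f b)) := by
              simp only [← h2]; tauto
            rcases hcomplete (f a) (f b) hfab with hc | hc
            · exact hc
            · tauto
          · exact (h1.mp ⟨h, h'⟩).1
        · intro h
          by_cases h' : ρ (f b) (f a)
          · have n1 : ¬ (ρ a b ∧ ¬ ρ b a) := by
              simp only [h1]; tauto
            have n2 : ¬ (ρ b a ∧ ¬ ρ a b) := by
              simp only [h2]; tauto
            rcases hcomplete a b hab with hc | hc
            · exact hc
            · tauto
          · exact (h1.mpr ⟨h, h'⟩).1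
    obtain ⟨g, ⟨hgbij, hgpres⟩, hgeq⟩ := hultra A f ⟨hfin, hinj, hρ⟩
    exact ⟨g, ⟨hgbij, fun a b => by simp only [← hgpres]⟩, hgeq⟩
  · intro x y
    constructor
    · intro h
      by_cases h' : ρ y x
      · exact Or.inr ⟨fun he => hirr x (he ▸ h), fun hc => hc.2 h', fun hc => hc.2 h⟩
      · exact Or.inl ⟨h, h'⟩
    · rintro (h | ⟨hne, h1, h2⟩)
      · exact h.1
      · rcases hcomplete x y hne with hc | hc
        · exact hc
        · by_cases h' : ρ x y
          · exact h'
          · exact absurd ⟨hc, h'⟩ h2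
end

section
/- Let κ be a cardinal and X = ⋃_{α<κ} X_α a disjoint union of pairwise isomorphic strongly connected binary structures. Then a set C is in P(X) if and only if C = ⋃_{α∈A} g(α) for some A ∈ [κ]^κ and some function g with g(α) ∈ P(X_α) for each α ∈ A. -/
/-- Copies of the substructure on `S`: subsets of `S` carrying a substructure
isomorphic to the substructure on `S`. -/
def copiesIn {X : Type*} (ρ : X → X → Prop) (S : Set X) : Set (Set X) :=
  {B | B ⊆ S ∧ ∃ f : X → X, Set.BijOn f S B ∧
    ∀ a ∈ S, ∀ b ∈ S, (ρ a b ↔ ρ (f a) (f b))}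

/-- The set of copies of the whole structure: images of self-embeddings. -/
def PX {X : Type*} (ρ : X → X → Prop) : Set (Set X) :=
  {C | ∃ f : X → X, Function.Injective f ∧
    (∀ a b : X, ρ a b ↔ ρ (f a) (f b)) ∧ C = Set.range f}

/-- The substructure on `S` is strongly connected: connected, and any two of its
copies contain points related by `Δ ∪ ρ ∪ ρ⁻¹`. -/
def StronglyConnectedOn {X : Type*} (ρ : X → X → Prop) (S : Set X) : Prop :=
  (∀ a ∈ S, ∀ b ∈ S, Relation.EqvGen ρ a b) ∧
  ∀ A ∈ copiesIn ρ S, ∀ B ∈ copiesIn ρ S,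
    ∃ a ∈ A, ∃ b ∈ B, a = b ∨ ρ a b ∨ ρ b a

/-- Fact 2.2: a set `C` is a copy of the disjoint union `X` of `κ`-many pairwise
isomorphic strongly connected structures iff it is a union of copies of the
pieces indexed by a set of full cardinality. -/
theorem copies_of_union {X ι : Type*} (ρ : X → X → Prop) (S : ι → Set X)
    (hcover : ∀ x : X, ∃! i, x ∈ S i)
    (hne : ∀ i, (S i).Nonempty)
    (hrel : ∀ a b : X, ρ a b → ∃ i, a ∈ S i ∧ b ∈ S i)
    (hsc : ∀ i, StronglyConnectedOn ρ (S i))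
    (hiso : ∀ i j, ∃ f : X → X, Set.BijOn f (S i) (S j) ∧
        ∀ a ∈ S i, ∀ b ∈ S i, (ρ a b ↔ ρ (f a) (f b))) :
    ∀ C : Set X, C ∈ PX ρ ↔
      ∃ A : Set ι, Cardinal.mk A = Cardinal.mk ι ∧
        ∃ g : ι → Set X, (∀ i ∈ A, g i ∈ copiesIn ρ (S i)) ∧ C = ⋃ i ∈ A, g i := by
  classical
  have hdisj : ∀ {x : X} {i j : ι}, x ∈ S i → x ∈ S j → i = j := by
    intro x i j hi hj
    obtain ⟨k, -, hu⟩ := hcover x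
    rw [hu i hi, hu j hj]
  have heqv : ∀ a b : X, Relation.EqvGen ρ a b → ∀ i, (a ∈ S i ↔ b ∈ S i) := by
    intro a b h
    induction h with
    | rel a b hab =>
        intro i
        obtain ⟨j, haj, hbj⟩ := hrel a b hab
        exact ⟨fun ha => (hdisj haj ha) ▸ hbj, fun hb => (hdisj hbj hb) ▸ haj⟩
    | refl a => intro i; exact Iff.rfl
    | symm a b _ ih => exact fun i => (ih i).symm
    | trans a b c _ _ ih1 ih2 => exact fun i => (ih1 i).trans (ih2 i)
  intro C
  constructor
  · rintro ⟨f, hfinj, hfrel, rfl⟩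
    have hfeqv : ∀ a b : X, Relation.EqvGen ρ a b → Relation.EqvGen ρ (f a) (f b) := by
      intro a b h
      induction h with
      | rel a b hab => exact Relation.EqvGen.rel _ _ ((hfrel a b).1 hab)
      | refl a => exact Relation.EqvGen.refl _
      | symm a b _ ih => exact Relation.EqvGen.symm _ _ ih
      | trans a b c _ _ ih1 ih2 => exact Relation.EqvGen.trans _ _ _ ih1 ih2
    set σ : ι → ι := fun i => (hcover (f (hne i).choose)).choose with hσdef
    have hσmem : ∀ i, ∀ x ∈ S i, f x ∈ S (σ i) := by
      intro i x hx
      have h0 : (hne i).choose ∈ S i := (hne i).choose_spec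
      have he : Relation.EqvGen ρ ((hne i).choose) x := (hsc i).1 _ h0 _ hx
      exact (heqv _ _ (hfeqv _ _ he) (σ i)).1 (hcover (f (hne i).choose)).choose_spec.1
    have hcopy : ∀ i, f '' S i ∈ copiesIn ρ (S (σ i)) := by
      intro i
      obtain ⟨h, hb, hp⟩ := hiso (σ i) i
      refine ⟨?_, fun x => f (h x), ?_, ?_⟩
      · rintro y ⟨x, hx, rfl⟩
        exact hσmem i x hx
      · exact (hfinj.injOn.bijOn_image).comp hb
      · intro a ha b hb'
        exact (hp a ha b hb').trans (hfrel (h a) (h b))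
    have hσinj : Function.Injective σ := by
      intro i k hik
      by_contra hne'
      obtain ⟨a, ha, b, hb, hab⟩ :=
        (hsc (σ i)).2 (f '' S i) (hcopy i) (f '' S k) (hik ▸ hcopy k)
      obtain ⟨x, hx, rfl⟩ := ha
      obtain ⟨y, hy, rfl⟩ := hb
      rcases hab with h | h | h
      · exact hne' (hdisj hx (by rw [hfinj h]; exact hy))
      · obtain ⟨j, hxj, hyj⟩ := hrel x y ((hfrel x y).2 h)
        exact hne' ((hdisj hx hxj).trans (hdisj hyj hy))
      · obtain ⟨j, hyj, hxj⟩ := hrel y x ((hfrel y x).2 h)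
        exact hne' ((hdisj hx hxj).trans (hdisj hyj hy))
    refine ⟨Set.range σ, Cardinal.mk_range_eq σ hσinj,
      fun j => if h : j ∈ Set.range σ then f '' S h.choose else ∅, ?_, ?_⟩
    · intro j hj
      simp only [dif_pos hj]
      obtain ⟨i, hi⟩ := hj
      have hci : (⟨i, hi⟩ : ∃ y, σ y = j).choose = i :=
        hσinj ((⟨i, hi⟩ : ∃ y, σ y = j).choose_spec.trans hi.symm)
      rw [hci, ← hi]
      exact hcopy i
    · ext y
      simp only [Set.mem_iUnion]
      constructor
      · rintro ⟨x, rfl⟩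
        have hx := (hcover x).choose_spec.1
        have hj : σ (hcover x).choose ∈ Set.range σ := ⟨_, rfl⟩
        refine ⟨σ (hcover x).choose, hj, ?_⟩
        rw [dif_pos hj, hσinj hj.choose_spec]
        exact ⟨x, hx, rfl⟩
      · rintro ⟨j, hj, hyj⟩
        rw [dif_pos hj] at hyj
        obtain ⟨x, -, rfl⟩ := hyj
        exact ⟨x, rfl⟩
  · rintro ⟨A, hA, g, hg, rfl⟩
    obtain ⟨e⟩ : Nonempty (ι ≃ A) := Cardinal.eq.1 hA.symm
    have hg' : ∀ i : ι, g (e i) ⊆ S (e i) ∧ ∃ φ : X → X,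
        Set.BijOn φ (S (e i)) (g (e i)) ∧
        ∀ a ∈ S (e i), ∀ b ∈ S (e i), (ρ a b ↔ ρ (φ a) (φ b)) :=
      fun i => hg (e i) (e i).2
    choose hsub φ hφbij hφrel using hg'
    choose ψ hψbij hψrel using fun i : ι => hiso i (e i)
    set P : X → ι := fun x => (hcover x).choose with hPdef
    set F : X → X := fun x => φ (P x) (ψ (P x) x) with hFdef
    have hPmem : ∀ x, x ∈ S (P x) := fun x => (hcover x).choose_spec.1
    have hPeq : ∀ {x : X} {i : ι}, x ∈ S i → P x = i :=
      fun {x i} hx => ((hcover x).choose_spec.2 i hx).symm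
    have hBij : ∀ i, Set.BijOn (fun x => φ i (ψ i x)) (S i) (g (e i)) :=
      fun i => (hφbij i).comp (hψbij i)
    have hFeq : ∀ {i : ι} {x : X}, x ∈ S i → F x = φ i (ψ i x) := by
      intro i x hx
      simp only [hFdef, hPeq hx]
    have hFg : ∀ {i : ι} {x : X}, x ∈ S i → F x ∈ g (e i) := by
      intro i x hx
      rw [hFeq hx]
      exact (hBij i).mapsTo hx
    have hFS : ∀ {i : ι} {x : X}, x ∈ S i → F x ∈ S (e i) :=
      fun {i x} hx => hsub _ (hFg hx)
    have einj : ∀ {i k : ι}, ((e i : A) : ι) = ((e k : A) : ι) → i = k :=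
      fun {i k} h => e.injective (Subtype.ext h)
    refine ⟨F, ?_, ?_, ?_⟩
    · intro a b hab
      have h1 : F a ∈ S (e (P a)) := hFS (hPmem a)
      have h2 : F b ∈ S (e (P b)) := hFS (hPmem b)
      rw [hab] at h1
      have hP' : P a = P b := einj (hdisj h1 h2)
      refine (hBij (P a)).injOn (hPmem a) (by rw [hP']; exact hPmem b) ?_
      show φ (P a) (ψ (P a) a) = φ (P a) (ψ (P a) b)
      calc φ (P a) (ψ (P a) a) = F a := (hFeq (hPmem a)).symm
        _ = F b := hab
        _ = φ (P b) (ψ (P b) b) := hFeq (hPmem b)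
        _ = φ (P a) (ψ (P a) b) := by rw [hP']
    · intro a b
      by_cases h : P a = P b
      · have hb' : b ∈ S (P a) := by rw [h]; exact hPmem b
        have := hφrel (P a) _ ((hψbij (P a)).mapsTo (hPmem a)) _ ((hψbij (P a)).mapsTo hb')
        rw [hFeq (hPmem a), hFeq hb']
        exact (hψrel (P a) a (hPmem a) b hb').trans this
      · constructor
        · intro hab
          obtain ⟨j, haj, hbj⟩ := hrel a b hab
          exact absurd ((hPeq haj).trans (hPeq hbj).symm) h
        · intro hab
          obtain ⟨j, haj, hbj⟩ := hrel _ _ hab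
          have h1 : F a ∈ S (e (P a)) := hFS (hPmem a)
          have h2 : F b ∈ S (e (P b)) := hFS (hPmem b)
          exact absurd (einj ((hdisj h1 haj).trans (hdisj h2 hbj).symm)) h
    · ext y
      simp only [Set.mem_iUnion, Set.mem_range]
      constructor
      · rintro ⟨j, hj, hyj⟩
        have hy' : y ∈ g ((e (e.symm ⟨j, hj⟩) : A) : ι) := by
          rw [e.apply_symm_apply]; exact hyj
        obtain ⟨x, hx, hxy⟩ := (hBij (e.symm ⟨j, hj⟩)).surjOn hy'
        exact ⟨x, by rw [hFeq hx]; exact hxy⟩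
      · rintro ⟨x, rfl⟩
        exact ⟨(e (P x) : A), (e (P x)).2, hFg (hPmem x)⟩
end

section
/- If n is a natural number and X = ⋃_{i<n} X_i is a disjoint union of n pairwise isomorphic strongly connected binary structures, then the poset ⟨P(X), ⊆⟩ is isomorphic to the n-th direct power of the poset ⟨P(X₀), ⊆⟩. -/
section Aux
variable {X : Type*} {ρ : X → X → Prop}

lemma eqvGen_map' {f : X → X} (hf : ∀ a b : X, ρ a b ↔ ρ (f a) (f b)) :
    ∀ {a b : X}, Relation.EqvGen ρ a b → Relation.EqvGen ρ (f a) (f b) := by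
  intro a b h
  induction h with
  | rel a b h => exact Relation.EqvGen.rel _ _ ((hf a b).1 h)
  | refl a => exact Relation.EqvGen.refl _
  | symm a b _ ih => exact Relation.EqvGen.symm _ _ ih
  | trans a b c _ _ ih1 ih2 => exact Relation.EqvGen.trans _ _ _ ih1 ih2

lemma bijOn_inverse' [Nonempty X] {A B : Set X} {g : X → X} (hg : Set.BijOn g A B)
    (hρ : ∀ a ∈ A, ∀ b ∈ A, (ρ a b ↔ ρ (g a) (g b))) :
    ∃ g' : X → X, Set.BijOn g' B A ∧ (∀ a ∈ B, ∀ b ∈ B, (ρ a b ↔ ρ (g' a) (g' b))) ∧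
      (∀ a ∈ A, g' (g a) = a) ∧ (∀ b ∈ B, g (g' b) = b) := by
  have hinv := hg.invOn_invFunOn
  set g' := Function.invFunOn g A with hg'
  have hbij : Set.BijOn g' B A := hinv.symm.bijOn hg.surjOn.mapsTo_invFunOn hg.mapsTo
  refine ⟨g', hbij, ?_, fun a ha => hinv.1 ha, fun b hb => hinv.2 hb⟩
  intro a ha b hb
  have h1 := hρ (g' a) (hbij.mapsTo ha) (g' b) (hbij.mapsTo hb)
  rw [hinv.2 ha, hinv.2 hb] at h1
  exact h1.symm

lemma copy_of' {A B B' : Set X} {e h : X → X} (he : Set.BijOn e A B)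
    (heρ : ∀ a ∈ A, ∀ b ∈ A, (ρ a b ↔ ρ (e a) (e b))) (hBB' : B ⊆ B')
    (hh : Set.BijOn h B' A)
    (hhρ : ∀ a ∈ B', ∀ b ∈ B', (ρ a b ↔ ρ (h a) (h b))) : B ∈ copiesIn ρ B' := by
  refine ⟨hBB', fun x => e (h x), he.comp hh, fun a ha b hb => ?_⟩
  exact (hhρ a ha b hb).trans (heρ _ (hh.mapsTo ha) _ (hh.mapsTo hb))

lemma copies_map' {A B : Set X} {g : X → X} (hg : Set.BijOn g A B)
    (hρ : ∀ a ∈ A, ∀ b ∈ A, (ρ a b ↔ ρ (g a) (g b)))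
    {g' : X → X} (hg' : Set.BijOn g' B A)
    (hρ' : ∀ a ∈ B, ∀ b ∈ B, (ρ a b ↔ ρ (g' a) (g' b)))
    {C : Set X} (hC : C ∈ copiesIn ρ A) : g '' C ∈ copiesIn ρ B := by
  obtain ⟨hCA, e, he, heρ⟩ := hC
  have hgC : Set.BijOn g C (g '' C) := (hg.injOn.mono hCA).bijOn_image
  refine copy_of' (B := g '' C) (hgC.comp he) ?_
    ((Set.image_mono (f := g) hCA).trans (by rw [hg.image_eq])) hg' hρ'
  intro a ha b hb
  exact (heρ a ha b hb).trans (hρ _ (hCA (he.mapsTo ha)) _ (hCA (he.mapsTo hb)))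
end Aux

/-- For a disjoint union of `n` pairwise isomorphic strongly connected structures,
the poset of copies is isomorphic to the `n`-th power of the poset of copies of
the first piece. -/
theorem poset_of_copies_finite_union {X : Type*} (n : ℕ) (hn : 0 < n)
    (ρ : X → X → Prop) (S : Fin n → Set X)
    (hcover : ∀ x : X, ∃! i, x ∈ S i)
    (hne : ∀ i, (S i).Nonempty)
    (hrel : ∀ a b : X, ρ a b → ∃ i, a ∈ S i ∧ b ∈ S i)
    (hsc : ∀ i, StronglyConnectedOn ρ (S i))
    (hiso : ∀ i j, ∃ f : X → X, Set.BijOn f (S i) (S j) ∧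
        ∀ a ∈ S i, ∀ b ∈ S i, (ρ a b ↔ ρ (f a) (f b))) :
    Nonempty ({C // C ∈ PX ρ} ≃o (Fin n → {B // B ∈ copiesIn ρ (S ⟨0, hn⟩)})) := by
  classical
  set i0 : Fin n := ⟨0, hn⟩ with hi0
  haveI : Nonempty X := ⟨(hne i0).choose⟩
  -- basic facts
  have hdisj : ∀ {i j : Fin n} {x : X}, x ∈ S i → x ∈ S j → i = j := by
    intro i j x hi hj
    obtain ⟨k, hk, huniq⟩ := hcover x
    rw [huniq i hi, huniq j hj]
  have hcomp : ∀ {a b : X}, Relation.EqvGen ρ a b → ∀ i, (a ∈ S i ↔ b ∈ S i) := by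
    intro a b h
    induction h with
    | rel a b h =>
      intro i
      obtain ⟨k, hak, hbk⟩ := hrel a b h
      constructor
      · intro ha; rwa [hdisj ha hak]
      · intro hb; rwa [hdisj hb hbk]
    | refl a => intro i; exact Iff.rfl
    | symm a b _ ih => intro i; exact (ih i).symm
    | trans a b c _ _ ih1 ih2 => intro i; exact (ih1 i).trans (ih2 i)
  -- the chosen isomorphisms
  choose g hgbij hgρ using fun j => hiso i0 j
  choose G hGbij hGρ hGg hgG using fun j => bijOn_inverse' (hgbij j) (hgρ j)
  -- each trace of a copy of X in a component is a copy of that component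
  have keyA : ∀ C ∈ PX ρ, ∀ j, C ∩ S j ∈ copiesIn ρ (S j) := by
    rintro C ⟨f, hfinj, hfρ, rfl⟩ j
    have hmap : ∀ i, ∃ k, ∀ x ∈ S i, f x ∈ S k := by
      intro i
      obtain ⟨a, ha⟩ := hne i
      obtain ⟨k, hk, -⟩ := hcover (f a)
      exact ⟨k, fun x hx => (hcomp (eqvGen_map' hfρ ((hsc i).1 a ha x hx)) k).1 hk⟩
    choose σ hσ using hmap
    have himg : ∀ i, f '' (S i) ∈ copiesIn ρ (S (σ i)) := by
      intro i
      refine copy_of' (e := f) hfinj.injOn.bijOn_image (fun a _ b _ => hfρ a b)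
        ?_ ((hgbij i).comp (hGbij (σ i))) ?_
      · rintro y ⟨x, hx, rfl⟩; exact hσ i x hx
      · intro a ha b hb
        exact (hGρ (σ i) a ha b hb).trans
          (hgρ i _ ((hGbij (σ i)).mapsTo ha) _ ((hGbij (σ i)).mapsTo hb))
    have hσinj : Function.Injective σ := by
      intro i j hij
      by_contra hne'
      have h2 : f '' (S j) ∈ copiesIn ρ (S (σ i)) := by rw [hij]; exact himg j
      obtain ⟨a, ha, b, hb, hab⟩ := (hsc (σ i)).2 _ (himg i) _ h2
      obtain ⟨x, hx, rfl⟩ := ha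
      obtain ⟨y, hy, rfl⟩ := hb
      rcases hab with h | h | h
      · have hx' : x ∈ S j := by rw [hfinj h]; exact hy
        exact hne' (hdisj hx hx')
      · obtain ⟨k, hk1, hk2⟩ := hrel x y ((hfρ x y).2 h)
        exact hne' ((hdisj hx hk1).trans (hdisj hy hk2).symm)
      · obtain ⟨k, hk1, hk2⟩ := hrel y x ((hfρ y x).2 h)
        exact hne' ((hdisj hx hk2).trans (hdisj hy hk1).symm)
    obtain ⟨i, hσi⟩ := (Finite.injective_iff_bijective.1 hσinj).2 j
    have hCS : Set.range f ∩ S j = f '' (S i) := by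
      apply Set.Subset.antisymm
      · rintro y ⟨⟨x, rfl⟩, hyj⟩
        obtain ⟨k, hk, -⟩ := hcover x
        have h1 : σ k = j := hdisj (hσ k x hk) hyj
        have h2 : k = i := hσinj (by rw [h1, hσi])
        exact ⟨x, by rw [← h2]; exact hk, rfl⟩
      · rintro y ⟨x, hx, rfl⟩
        exact ⟨⟨x, rfl⟩, by rw [← hσi]; exact hσ i x hx⟩
    rw [hCS, ← hσi]
    exact himg i
  -- realization of a tuple of copies as a copy of X
  have keyB : ∀ B : Fin n → Set X, (∀ j, B j ∈ copiesIn ρ (S i0)) →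
      (⋃ j, g j '' (B j)) ∈ PX ρ := by
    intro B hB
    have hBsub : ∀ j, B j ⊆ S i0 := fun j => (hB j).1
    choose e hebij heρ using fun j => (hB j).2
    set idx : X → Fin n := fun x => (hcover x).choose with hidx
    have hidxmem : ∀ x, x ∈ S (idx x) := fun x => (hcover x).choose_spec.1
    set F : X → X := fun x => g (idx x) (e (idx x) (G (idx x) x)) with hF
    have hGm : ∀ x, G (idx x) x ∈ S i0 := fun x => (hGbij (idx x)).mapsTo (hidxmem x)
    have hem : ∀ x, e (idx x) (G (idx x) x) ∈ B (idx x) :=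
      fun x => (hebij (idx x)).mapsTo (hGm x)
    have hFm : ∀ x, F x ∈ S (idx x) :=
      fun x => (hgbij (idx x)).mapsTo (hBsub _ (hem x))
    have hFinj : Function.Injective F := by
      intro x y hxy
      have hij : idx x = idx y := hdisj (hxy ▸ hFm x) (hFm y)
      have h2 : g (idx x) (e (idx x) (G (idx x) x))
          = g (idx x) (e (idx x) (G (idx x) y)) := by
        have h := hxy
        simp only [hF] at h
        rwa [← hij] at h
      have hy' : e (idx x) (G (idx x) y) ∈ B (idx x) := by rw [hij]; exact hem y
      have h3 : e (idx x) (G (idx x) x) = e (idx x) (G (idx x) y) :=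
        (hgbij (idx x)).injOn (hBsub _ (hem x)) (hBsub _ hy') h2
      have h4 : G (idx x) x = G (idx x) y :=
        (hebij (idx x)).injOn (hGm x) (by rw [hij]; exact hGm y) h3
      exact (hGbij (idx x)).injOn (hidxmem x) (by rw [hij]; exact hidxmem y) h4
    have hFρ : ∀ a b : X, ρ a b ↔ ρ (F a) (F b) := by
      intro a b
      by_cases hab : idx a = idx b
      · have hbmem : b ∈ S (idx a) := by rw [hab]; exact hidxmem b
        have hGb : G (idx a) b ∈ S i0 := (hGbij (idx a)).mapsTo hbmem
        have heb : e (idx a) (G (idx a) b) ∈ B (idx a) := (hebij (idx a)).mapsTo hGb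
        have hFb : F b = g (idx a) (e (idx a) (G (idx a) b)) := by
          simp only [hF]; rw [hab]
        calc ρ a b ↔ ρ (G (idx a) a) (G (idx a) b) := hGρ (idx a) a (hidxmem a) b hbmem
          _ ↔ ρ (e (idx a) (G (idx a) a)) (e (idx a) (G (idx a) b)) :=
              heρ (idx a) _ (hGm a) _ hGb
          _ ↔ ρ (F a) (F b) := by
              rw [hFb]
              exact hgρ (idx a) _ (hBsub _ (hem a)) _ (hBsub _ heb)
      · constructor
        · intro h
          obtain ⟨k, h1, h2⟩ := hrel a b h
          exact absurd ((hdisj (hidxmem a) h1).trans (hdisj (hidxmem b) h2).symm) hab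
        · intro h
          obtain ⟨k, h1, h2⟩ := hrel _ _ h
          exact absurd ((hdisj (hFm a) h1).trans (hdisj (hFm b) h2).symm) hab
    refine ⟨F, hFinj, hFρ, ?_⟩
    apply Set.Subset.antisymm
    · intro y hy
      obtain ⟨j, b, hb, rfl⟩ := by
        simpa only [Set.mem_iUnion, Set.mem_image] using hy
      obtain ⟨s, hs, rfl⟩ := (hebij j).surjOn hb
      obtain ⟨x, hx, rfl⟩ := (hGbij j).surjOn hs
      have hjx : idx x = j := hdisj (hidxmem x) hx
      exact ⟨x, by simp only [hF]; rw [hjx]⟩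
    · rintro y ⟨x, rfl⟩
      exact Set.mem_iUnion.2 ⟨idx x, ⟨e (idx x) (G (idx x) x), hem x, rfl⟩⟩
  -- pieces of realizations
  have hpiece : ∀ (B : Fin n → Set X), (∀ j, B j ⊆ S i0) →
      ∀ j, (⋃ k, g k '' (B k)) ∩ S j = g j '' (B j) := by
    intro B hB j
    apply Set.Subset.antisymm
    · rintro y ⟨hy1, hy2⟩
      obtain ⟨k, b, hb, rfl⟩ := by
        simpa only [Set.mem_iUnion, Set.mem_image] using hy1
      have : k = j := hdisj ((hgbij k).mapsTo (hB k hb)) hy2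
      exact ⟨b, by rw [← this]; exact hb, by rw [this]⟩
    · rintro y ⟨b, hb, rfl⟩
      exact ⟨Set.mem_iUnion.2 ⟨j, ⟨b, hb, rfl⟩⟩, (hgbij j).mapsTo (hB j hb)⟩
  have hdecomp : ∀ C : Set X, ⋃ j, C ∩ S j = C := by
    intro C
    ext x
    simp only [Set.mem_iUnion, Set.mem_inter_iff]
    constructor
    · rintro ⟨j, hx, -⟩; exact hx
    · intro hx; obtain ⟨j, hj, -⟩ := hcover x; exact ⟨j, hx, hj⟩
  have img_inv : ∀ j (A : Set X), A ⊆ S j → g j '' (G j '' A) = A := by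
    intro j A hA
    ext y
    constructor
    · rintro ⟨-, ⟨x, hx, rfl⟩, rfl⟩
      rwa [hgG j x (hA hx)]
    · intro hy
      exact ⟨G j y, ⟨y, hy, rfl⟩, hgG j y (hA hy)⟩
  have img_inv' : ∀ j (A : Set X), A ⊆ S i0 → G j '' (g j '' A) = A := by
    intro j A hA
    ext y
    constructor
    · rintro ⟨-, ⟨x, hx, rfl⟩, rfl⟩
      rwa [hGg j x (hA hx)]
    · intro hy
      exact ⟨g j y, ⟨y, hy, rfl⟩, hGg j y (hA hy)⟩
  refine ⟨{ toFun := fun C j => ⟨G j '' (C.1 ∩ S j),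
              copies_map' (hGbij j) (hGρ j) (hgbij j) (hgρ j) (keyA C.1 C.2 j)⟩,
            invFun := fun B => ⟨⋃ j, g j '' (B j).1, keyB _ (fun j => (B j).2)⟩,
            left_inv := ?_, right_inv := ?_, map_rel_iff' := ?_ }⟩
  · intro C
    apply Subtype.ext
    show (⋃ j, g j '' (G j '' (C.1 ∩ S j))) = C.1
    have : ∀ j, g j '' (G j '' (C.1 ∩ S j)) = C.1 ∩ S j :=
      fun j => img_inv j _ Set.inter_subset_right
    rw [Set.iUnion_congr this, hdecomp]
  · intro B
    funext j
    apply Subtype.ext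
    show G j '' ((⋃ k, g k '' (B k).1) ∩ S j) = (B j).1
    rw [hpiece _ (fun k => (B k).2.1) j, img_inv' j _ (B j).2.1]
  · intro C C'
    constructor
    · intro h
      show C.1 ⊆ C'.1
      have h' : ∀ j, G j '' (C.1 ∩ S j) ⊆ G j '' (C'.1 ∩ S j) := fun j => h j
      have h2 : ∀ j, C.1 ∩ S j ⊆ C'.1 ∩ S j := by
        intro j
        exact (((hGbij j).injOn).image_subset_image_iff
          Set.inter_subset_right Set.inter_subset_right).1 (h' j)
      calc C.1 = ⋃ j, C.1 ∩ S j := (hdecomp C.1).symm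
        _ ⊆ ⋃ j, C'.1 ∩ S j := Set.iUnion_mono h2
        _ = C'.1 := hdecomp C'.1
    · intro h j
      show G j '' (C.1 ∩ S j) ⊆ G j '' (C'.1 ∩ S j)
      exact Set.image_mono (Set.inter_subset_inter_left _ h)
end

section
/- If X = ⋃_{α<κ} X_α (κ an infinite cardinal) is a disjoint union of pairwise isomorphic strongly connected binary structures, then the poset ⟨P(X), ⊆⟩ is atomless: every element has two incompatible elements below it (in fact, any two disjoint unions of κ-many whole components are incompatible below any given copy). -/
/-- For a disjoint union of infinitely many pairwise isomorphic strongly connected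
structures, the poset of copies ordered by `⊆` is atomless. -/
theorem poset_of_copies_atomless {X ι : Type*} [Infinite ι]
    (ρ : X → X → Prop) (S : ι → Set X)
    (hcover : ∀ x : X, ∃! i, x ∈ S i)
    (hne : ∀ i, (S i).Nonempty)
    (hrel : ∀ a b : X, ρ a b → ∃ i, a ∈ S i ∧ b ∈ S i)
    (hsc : ∀ i, StronglyConnectedOn ρ (S i))
    (hiso : ∀ i j, ∃ f : X → X, Set.BijOn f (S i) (S j) ∧
        ∀ a ∈ S i, ∀ b ∈ S i, (ρ a b ↔ ρ (f a) (f b))) :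
    ∀ C ∈ PX ρ, ∃ C₁ ∈ PX ρ, ∃ C₂ ∈ PX ρ, C₁ ⊆ C ∧ C₂ ⊆ C ∧
      ¬ ∃ D ∈ PX ρ, D ⊆ C₁ ∧ D ⊆ C₂ := by
  classical
  intro C hC
  obtain ⟨f, hfinj, hfρ, rfl⟩ := hC
  set idx : X → ι := fun x => (hcover x).choose with hidxdef
  have hidx : ∀ x, x ∈ S (idx x) := fun x => (hcover x).choose_spec.1
  have huniq : ∀ x i, x ∈ S i → i = idx x := fun x i h => (hcover x).choose_spec.2 i h
  have hunique2 : ∀ x i j, x ∈ S i → x ∈ S j → i = j := fun x i j hi hj =>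
    (huniq x i hi).trans (huniq x j hj).symm
  have key : ∀ φ : ι → ι, Function.Injective φ →
      ∃ g : X → X, Function.Injective g ∧ (∀ a b, ρ a b ↔ ρ (g a) (g b)) ∧
        (∀ x, ∃ y, y ∈ S (φ (idx x)) ∧ g x = f y) := by
    intro φ hφ
    choose h hbij hρ using fun i => hiso i (φ i)
    refine ⟨fun x => f (h (idx x) x), ?_, ?_, ?_⟩
    · intro a b hab
      have hab' : h (idx a) a = h (idx b) b := hfinj hab
      have ha : h (idx a) a ∈ S (φ (idx a)) := (hbij (idx a)).mapsTo (hidx a)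
      have hb : h (idx b) b ∈ S (φ (idx b)) := (hbij (idx b)).mapsTo (hidx b)
      rw [hab'] at ha
      have hii : idx a = idx b := hφ (hunique2 _ _ _ ha hb)
      rw [hii] at hab'
      exact (hbij (idx b)).injOn (hii ▸ hidx a) (hidx b) hab'
    · intro a b
      constructor
      · intro hab
        obtain ⟨i, ha, hb⟩ := hrel a b hab
        have ha' : idx a = i := (huniq a i ha).symm
        have hb' : idx b = i := (huniq b i hb).symm
        simp only [ha', hb']
        exact (hfρ _ _).mp ((hρ i a ha b hb).mp hab)
      · intro hgab
        have hab' : ρ (h (idx a) a) (h (idx b) b) := (hfρ _ _).mpr hgab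
        obtain ⟨j, hja, hjb⟩ := hrel _ _ hab'
        have ha : h (idx a) a ∈ S (φ (idx a)) := (hbij (idx a)).mapsTo (hidx a)
        have hb : h (idx b) b ∈ S (φ (idx b)) := (hbij (idx b)).mapsTo (hidx b)
        have hii : idx a = idx b :=
          hφ ((hunique2 _ _ _ ha hja).trans (hunique2 _ _ _ hjb hb))
        rw [hii] at hab'
        exact (hρ (idx b) a (hii ▸ hidx a) b (hidx b)).mpr hab'
    · exact fun x => ⟨h (idx x) x, (hbij (idx x)).mapsTo (hidx x), rfl⟩
  obtain ⟨e⟩ : Nonempty (ι ⊕ ι ≃ ι) := by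
    rw [← Cardinal.eq]
    simp [Cardinal.add_eq_self (Cardinal.aleph0_le_mk ι)]
  have hdis : ∀ i j : ι, e (Sum.inl i) ≠ e (Sum.inr j) := by
    intro i j hh
    exact absurd (e.injective hh) (by simp)
  obtain ⟨g₁, hg₁inj, hg₁ρ, hg₁rng⟩ :=
    key (fun i => e (Sum.inl i)) (fun a b hh => Sum.inl.inj (e.injective hh))
  obtain ⟨g₂, hg₂inj, hg₂ρ, hg₂rng⟩ :=
    key (fun i => e (Sum.inr i)) (fun a b hh => Sum.inr.inj (e.injective hh))
  refine ⟨Set.range g₁, ⟨g₁, hg₁inj, hg₁ρ, rfl⟩, Set.range g₂, ⟨g₂, hg₂inj, hg₂ρ, rfl⟩,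
    ?_, ?_, ?_⟩
  · rintro _ ⟨x, rfl⟩; obtain ⟨y, -, hy⟩ := hg₁rng x; exact ⟨y, hy.symm⟩
  · rintro _ ⟨x, rfl⟩; obtain ⟨y, -, hy⟩ := hg₂rng x; exact ⟨y, hy.symm⟩
  · rintro ⟨D, ⟨d, hdinj, hdρ, rfl⟩, hD1, hD2⟩
    obtain ⟨i0⟩ : Nonempty ι := inferInstance
    obtain ⟨x0, -⟩ := hne i0
    obtain ⟨u, hu⟩ := hD1 ⟨x0, rfl⟩
    obtain ⟨v, hv⟩ := hD2 ⟨x0, rfl⟩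
    obtain ⟨y1, hy1, hgy1⟩ := hg₁rng u
    obtain ⟨y2, hy2, hgy2⟩ := hg₂rng v
    have hfy : f y1 = f y2 := by rw [← hgy1, ← hgy2, hu, hv]
    have hy : y1 = y2 := hfinj hfy
    subst hy
    exact hdis _ _ (hunique2 y1 _ _ hy1 hy2)
end

section
/- The binary tree ⟨2^{<ω}, ⊂⟩ of finite binary sequences ordered by strict extension is connected but not strongly connected. -/
lemma cons_copy (c : Bool) :
    Set.range (List.cons c) ∈
      copiesIn (fun s t : List Bool => s <+: t ∧ s ≠ t) Set.univ := by
  refine ⟨Set.subset_univ _, List.cons c, ⟨?_, ?_, ?_⟩, ?_⟩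
  · exact fun x _ => ⟨x, rfl⟩
  · intro x _ y _ h
    exact (List.cons.injEq _ _ _ _ ▸ h).2
  · intro x hx
    rcases hx with ⟨y, rfl⟩
    exact ⟨y, trivial, rfl⟩
  · intro a _ b _
    constructor
    · rintro ⟨⟨r, hr⟩, hne⟩
      exact ⟨⟨r, by simp [← hr]⟩, by simpa using hne⟩
    · rintro ⟨⟨r, hr⟩, hne⟩
      simp only [List.cons_append, List.cons.injEq, true_and] at hr
      exact ⟨⟨r, hr⟩, fun h => hne (by simp [h])⟩

/-- The binary tree `⟨2^{<ω}, ⊂⟩` is connected but not strongly connected. -/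
theorem binaryTree_connected_not_stronglyConnected :
    (∀ s t : List Bool, Relation.EqvGen (fun s t : List Bool => s <+: t ∧ s ≠ t) s t) ∧
    ¬ StronglyConnectedOn (fun s t : List Bool => s <+: t ∧ s ≠ t) Set.univ := by
  have base : ∀ s : List Bool,
      Relation.EqvGen (fun s t : List Bool => s <+: t ∧ s ≠ t) [] s := by
    intro s
    rcases eq_or_ne ([] : List Bool) s with h | h
    · exact h ▸ Relation.EqvGen.refl _
    · exact Relation.EqvGen.rel _ _ ⟨List.nil_prefix, h⟩
  constructor
  · intro s t
    exact Relation.EqvGen.trans _ _ _ (Relation.EqvGen.symm _ _ (base s)) (base t)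
  · rintro ⟨-, h⟩
    obtain ⟨a, ⟨a', rfl⟩, b, ⟨b', rfl⟩, hab⟩ :=
      h _ (cons_copy true) _ (cons_copy false)
    rcases hab with h | ⟨⟨r, hr⟩, -⟩ | ⟨⟨r, hr⟩, -⟩ <;> simp_all
end
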